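/- Let A be a bounded linear operator on a complex Hilbert space H. Then w(A)² ≥ (1/4)‖A*A + AA*‖ + (1/4) | ‖Re(A) + Im(A)‖² − ‖Re(A) − Im(A)‖² |. -/

import Mathlib

open ContinuousLinearMap Complex

variable {H : Type*} [NormedAddCommGroup H] [InnerProductSpace ℂ H] [CompleteSpace H]

noncomputable def nrad (A : H →L[ℂ] H) : ℝ :=
  ⨆ x : {x : H // ‖x‖ = 1}, ‖(inner ℂ (A x) (x : H) : ℂ)‖

noncomputable def reP (A : H →L[ℂ] H) : H →L[ℂ] H := (2 : ℂ)⁻¹ • (A + adjoint A)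
noncomputable def imP (A : H →L[ℂ] H) : H →L[ℂ] H := (2 * Complex.I)⁻¹ • (A - adjoint A)

noncomputable def oabs (A : H →L[ℂ] H) : H →L[ℂ] H := cfc Real.sqrt (adjoint A * A)

noncomputable def opow (T : H →L[ℂ] H) (r : ℝ) : H →L[ℂ] H := cfc (fun t : ℝ => t ^ r) T

local notation "⟪" x ", " y "⟫" => @inner ℂ _ _ x y

set_option linter.unusedSectionVars false

lemma symm_inner {T : H →L[ℂ] H} (hT : adjoint T = T) (x y : H) :
    ⟪T y, x⟫ = starRingEnd ℂ ⟪T x, y⟫ := by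
  conv_lhs => rw [← hT]
  rw [adjoint_inner_left, ← inner_conj_symm]

lemma norm_le_of_symm {T : H →L[ℂ] H} (hT : adjoint T = T) {c : ℝ} (hc : 0 ≤ c)
    (h : ∀ x : H, ‖(⟪T x, x⟫ : ℂ)‖ ≤ c * ‖x‖ ^ 2) : ‖T‖ ≤ c := by
  have key : ∀ x y : H, Complex.re ⟪T x, y⟫ ≤ c / 2 * (‖x‖ ^ 2 + ‖y‖ ^ 2) := by
    intro x y
    have polar : (⟪T (x + y), x + y⟫ : ℂ) - ⟪T (x - y), x - y⟫
        = 2 * ⟪T x, y⟫ + 2 * starRingEnd ℂ ⟪T x, y⟫ := by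
      rw [← symm_inner hT x y]
      simp only [map_add, map_sub, inner_add_left, inner_add_right, inner_sub_left,
        inner_sub_right]
      ring
    have hre : (4 : ℝ) * Complex.re ⟪T x, y⟫
        = Complex.re (⟪T (x + y), x + y⟫ : ℂ) - Complex.re (⟪T (x - y), x - y⟫ : ℂ) := by
      have := congrArg Complex.re polar
      simp only [Complex.sub_re, Complex.add_re, Complex.mul_re, Complex.conj_re,
        Complex.conj_im] at this ⊢
      rw [this]; norm_num; ring
    have h1 : Complex.re (⟪T (x + y), x + y⟫ : ℂ) ≤ c * ‖x + y‖ ^ 2 :=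
      (Complex.re_le_norm _).trans (h _)
    have h2 : -(c * ‖x - y‖ ^ 2) ≤ Complex.re (⟪T (x - y), x - y⟫ : ℂ) := by
      have := (Complex.abs_re_le_norm (⟪T (x - y), x - y⟫ : ℂ)).trans (h _)
      rw [abs_le] at this; exact this.1
    have hpar : ‖x + y‖ * ‖x + y‖ + ‖x - y‖ * ‖x - y‖ = 2 * (‖x‖ * ‖x‖ + ‖y‖ * ‖y‖) :=
      by have := parallelogram_law_with_norm ℂ x y; simp only [sq] at this; exact this
    nlinarith [hpar]
  refine opNorm_le_bound T hc fun x => ?_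
  by_cases hTx : T x = 0
  · simp [hTx, mul_nonneg hc (norm_nonneg x)]
  have hTxpos : 0 < ‖T x‖ := norm_pos_iff.mpr hTx
  set y : H := ((‖x‖ / ‖T x‖ : ℝ) : ℂ) • T x with hy
  have hinner : Complex.re ⟪T x, y⟫ = ‖x‖ * ‖T x‖ := by
    rw [hy, inner_smul_right]
    simp [Complex.ofReal_mul, ← Complex.ofReal_pow, inner_self_eq_norm_sq_to_K]
    rw [div_mul_eq_mul_div, mul_comm]
    field_simp
  have hyn : ‖y‖ = ‖x‖ := by
    rw [hy, norm_smul]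
    simp [abs_div, _root_.abs_of_nonneg (norm_nonneg x), _root_.abs_of_pos hTxpos]
    field_simp
  have := key x y
  rw [hinner, hyn] at this
  have hx : 0 < ‖x‖ := by
    rcases eq_or_ne x 0 with rfl | hx0
    · simp at hTx
    · exact norm_pos_iff.mpr hx0
  nlinarith [mul_pos hx hTxpos]

lemma sa_B (A : H →L[ℂ] H) : adjoint (reP A + imP A) = reP A + imP A := by
  rw [← star_eq_adjoint]
  simp only [reP, imP, star_add, star_smul, star_sub, ← star_eq_adjoint, star_star]
  rw [show star (2:ℂ)⁻¹ = (2:ℂ)⁻¹ by simp,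
      show star (2*Complex.I:ℂ)⁻¹ = -(2*Complex.I:ℂ)⁻¹ by
        rw [star_inv₀]; simp [Complex.ext_iff]]
  module

lemma sa_C (A : H →L[ℂ] H) : adjoint (reP A - imP A) = reP A - imP A := by
  rw [← star_eq_adjoint]
  simp only [reP, imP, star_sub, star_smul, star_add, ← star_eq_adjoint, star_star]
  rw [show star (2:ℂ)⁻¹ = (2:ℂ)⁻¹ by simp,
      show star (2*Complex.I:ℂ)⁻¹ = -(2*Complex.I:ℂ)⁻¹ by
        rw [star_inv₀]; simp [Complex.ext_iff]]
  module

lemma sq_identity (A : H →L[ℂ] H) :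
    (reP A + imP A) * (reP A + imP A) + (reP A - imP A) * (reP A - imP A)
      = adjoint A * A + A * adjoint A := by
  simp only [reP, imP, smul_add, smul_sub, add_mul, mul_add, sub_mul, mul_sub,
    smul_mul_assoc, mul_smul_comm, smul_smul]
  have hI : ((2:ℂ) * Complex.I)⁻¹ = -(2:ℂ)⁻¹ * Complex.I := by
    rw [mul_inv, Complex.inv_I]; ring
  rw [hI]
  match_scalars <;> (ring_nf; simp [Complex.I_sq] <;> ring_nf)

lemma abs_re_add_abs_im_le (z : ℂ) : |z.re| + |z.im| ≤ Real.sqrt 2 * ‖z‖ := by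
  have hz : ‖z‖ = Real.sqrt (z.re^2 + z.im^2) := by
    rw [Complex.norm_def, Complex.normSq_apply]; ring_nf
  rw [hz, ← Real.sqrt_mul (by norm_num)]
  have : |z.re| + |z.im| = Real.sqrt ((|z.re| + |z.im|)^2) := by
    rw [Real.sqrt_sq (by positivity)]
  rw [this]
  apply Real.sqrt_le_sqrt
  nlinarith [_root_.sq_abs z.re, _root_.sq_abs z.im, sq_nonneg (|z.re| - |z.im|)]

lemma nrad_bdd (A : H →L[ℂ] H) :
    BddAbove (Set.range fun x : {x : H // ‖x‖ = 1} => ‖(⟪A x, (x : H)⟫ : ℂ)‖) := by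
  refine ⟨‖A‖, ?_⟩
  rintro _ ⟨x, rfl⟩
  calc ‖(⟪A x, (x : H)⟫ : ℂ)‖ ≤ ‖A (x : H)‖ * ‖(x : H)‖ := norm_inner_le_norm _ _
    _ ≤ ‖A‖ * ‖(x:H)‖ * ‖(x:H)‖ := by gcongr; exact le_opNorm A x
    _ = ‖A‖ := by rw [x.2]; ring

lemma inner_le_nrad (A : H →L[ℂ] H) (x : H) (hx : ‖x‖ = 1) :
    ‖(⟪A x, x⟫ : ℂ)‖ ≤ nrad A :=
  le_ciSup (nrad_bdd A) (⟨x, hx⟩ : {x : H // ‖x‖ = 1})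

lemma nrad_nonneg (A : H →L[ℂ] H) : 0 ≤ nrad A :=
  Real.iSup_nonneg fun _ => norm_nonneg _

lemma inner_B_bound (A : H →L[ℂ] H) (x : H) (hx : ‖x‖ = 1) :
    ‖(⟪(reP A + imP A) x, x⟫ : ℂ)‖ ≤ Real.sqrt 2 * nrad A := by
  have hadj : (⟪adjoint A x, x⟫ : ℂ) = starRingEnd ℂ ⟪A x, x⟫ := by
    rw [adjoint_inner_left, ← inner_conj_symm]
  have : (⟪(reP A + imP A) x, x⟫ : ℂ)
      = starRingEnd ℂ (2:ℂ)⁻¹ * (⟪A x, x⟫ + starRingEnd ℂ ⟪A x, x⟫)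
        + starRingEnd ℂ ((2*Complex.I):ℂ)⁻¹ * (⟪A x, x⟫ - starRingEnd ℂ ⟪A x, x⟫) := by
    simp only [reP, imP, ContinuousLinearMap.add_apply, ContinuousLinearMap.smul_apply,
      ContinuousLinearMap.sub_apply, inner_add_left, inner_sub_left, inner_smul_left, hadj]
  rw [this]
  set z : ℂ := ⟪A x, x⟫
  calc ‖starRingEnd ℂ (2:ℂ)⁻¹ * (z + starRingEnd ℂ z)
        + starRingEnd ℂ ((2*Complex.I):ℂ)⁻¹ * (z - starRingEnd ℂ z)‖
      ≤ ‖starRingEnd ℂ (2:ℂ)⁻¹ * (z + starRingEnd ℂ z)‖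
        + ‖starRingEnd ℂ ((2*Complex.I):ℂ)⁻¹ * (z - starRingEnd ℂ z)‖ := norm_add_le _ _
    _ = |z.re| + |z.im| := by
        rw [Complex.add_conj, Complex.sub_conj]
        simp [norm_mul, _root_.abs_of_nonneg]
    _ ≤ Real.sqrt 2 * ‖z‖ := abs_re_add_abs_im_le z
    _ ≤ Real.sqrt 2 * nrad A :=
        mul_le_mul_of_nonneg_left (inner_le_nrad A x hx) (Real.sqrt_nonneg 2)

lemma inner_C_bound (A : H →L[ℂ] H) (x : H) (hx : ‖x‖ = 1) :
    ‖(⟪(reP A - imP A) x, x⟫ : ℂ)‖ ≤ Real.sqrt 2 * nrad A := by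
  have hadj : (⟪adjoint A x, x⟫ : ℂ) = starRingEnd ℂ ⟪A x, x⟫ := by
    rw [adjoint_inner_left, ← inner_conj_symm]
  have : (⟪(reP A - imP A) x, x⟫ : ℂ)
      = starRingEnd ℂ (2:ℂ)⁻¹ * (⟪A x, x⟫ + starRingEnd ℂ ⟪A x, x⟫)
        - starRingEnd ℂ ((2*Complex.I):ℂ)⁻¹ * (⟪A x, x⟫ - starRingEnd ℂ ⟪A x, x⟫) := by
    simp only [reP, imP, ContinuousLinearMap.sub_apply, ContinuousLinearMap.smul_apply,
      ContinuousLinearMap.add_apply, inner_add_left, inner_sub_left, inner_smul_left, hadj]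
  rw [this]
  set z : ℂ := ⟪A x, x⟫
  calc ‖starRingEnd ℂ (2:ℂ)⁻¹ * (z + starRingEnd ℂ z)
        - starRingEnd ℂ ((2*Complex.I):ℂ)⁻¹ * (z - starRingEnd ℂ z)‖
      ≤ ‖starRingEnd ℂ (2:ℂ)⁻¹ * (z + starRingEnd ℂ z)‖
        + ‖starRingEnd ℂ ((2*Complex.I):ℂ)⁻¹ * (z - starRingEnd ℂ z)‖ := norm_sub_le _ _
    _ = |z.re| + |z.im| := by
        rw [Complex.add_conj, Complex.sub_conj]
        simp [norm_mul, _root_.abs_of_nonneg]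
    _ ≤ Real.sqrt 2 * ‖z‖ := abs_re_add_abs_im_le z
    _ ≤ Real.sqrt 2 * nrad A :=
        mul_le_mul_of_nonneg_left (inner_le_nrad A x hx) (Real.sqrt_nonneg 2)

lemma inner_bound_all (T : H →L[ℂ] H) {c : ℝ} (hc : 0 ≤ c)
    (h : ∀ x : H, ‖x‖ = 1 → ‖(⟪T x, x⟫ : ℂ)‖ ≤ c) :
    ∀ x : H, ‖(⟪T x, x⟫ : ℂ)‖ ≤ c * ‖x‖ ^ 2 := by
  intro x
  rcases eq_or_ne x 0 with rfl | hx0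
  · simp
  have hx : 0 < ‖x‖ := norm_pos_iff.mpr hx0
  set u : H := ((‖x‖⁻¹ : ℝ) : ℂ) • x with hu
  have hun : ‖u‖ = 1 := by
    rw [hu, norm_smul, Complex.norm_real, Real.norm_eq_abs,
      _root_.abs_of_nonneg (by positivity)]
    field_simp
  have hxu : x = ((‖x‖ : ℝ) : ℂ) • u := by
    rw [hu, smul_smul, ← Complex.ofReal_mul, mul_inv_cancel₀ (ne_of_gt hx),
      Complex.ofReal_one, one_smul]
  have hval : (⟪T x, x⟫ : ℂ) = ((‖x‖ * ‖x‖ : ℝ) : ℂ) * (⟪T u, u⟫ : ℂ) := by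
    conv_lhs => rw [hxu]
    rw [map_smul, inner_smul_left, inner_smul_right, Complex.conj_ofReal]
    push_cast; ring
  rw [hval, norm_mul]
  have := h u hun
  rw [Complex.norm_real, Real.norm_eq_abs,
    _root_.abs_of_nonneg (by positivity : (0:ℝ) ≤ ‖x‖ * ‖x‖)]
  calc ‖x‖ * ‖x‖ * ‖(⟪T u, u⟫ : ℂ)‖ ≤ ‖x‖ * ‖x‖ * c := by
        exact mul_le_mul_of_nonneg_left this (by positivity)
    _ = c * ‖x‖ ^ 2 := by ring

theorem stmt2 (A : H →L[ℂ] H) :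
    (nrad A) ^ 2 ≥ (1/4) * ‖adjoint A * A + A * adjoint A‖
      + (1/4) * |‖reP A + imP A‖ ^ 2 - ‖reP A - imP A‖ ^ 2| := by
  set w := nrad A with hw
  have hw0 : 0 ≤ w := nrad_nonneg A
  have hc : (0:ℝ) ≤ Real.sqrt 2 * w := by positivity
  have hB : ‖reP A + imP A‖ ≤ Real.sqrt 2 * w :=
    norm_le_of_symm (sa_B A) hc (inner_bound_all _ hc (inner_B_bound A))
  have hC : ‖reP A - imP A‖ ≤ Real.sqrt 2 * w :=
    norm_le_of_symm (sa_C A) hc (inner_bound_all _ hc (inner_C_bound A))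
  have hsq : (Real.sqrt 2 * w) ^ 2 = 2 * w ^ 2 := by
    rw [mul_pow, Real.sq_sqrt (by norm_num : (0:ℝ) ≤ 2)]
  have hB2 : ‖reP A + imP A‖ ^ 2 ≤ 2 * w ^ 2 := by
    rw [← hsq]; exact pow_le_pow_left₀ (norm_nonneg _) hB 2
  have hC2 : ‖reP A - imP A‖ ^ 2 ≤ 2 * w ^ 2 := by
    rw [← hsq]; exact pow_le_pow_left₀ (norm_nonneg _) hC 2
  have hK : ‖adjoint A * A + A * adjoint A‖
      ≤ ‖reP A + imP A‖ ^ 2 + ‖reP A - imP A‖ ^ 2 := by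
    rw [← sq_identity A]
    calc ‖(reP A + imP A) * (reP A + imP A) + (reP A - imP A) * (reP A - imP A)‖
        ≤ ‖(reP A + imP A) * (reP A + imP A)‖ + ‖(reP A - imP A) * (reP A - imP A)‖ :=
          norm_add_le _ _
      _ ≤ ‖reP A + imP A‖ * ‖reP A + imP A‖ + ‖reP A - imP A‖ * ‖reP A - imP A‖ := by
          gcongr <;> exact norm_mul_le _ _
      _ = ‖reP A + imP A‖ ^ 2 + ‖reP A - imP A‖ ^ 2 := by ring
  rcases abs_cases (‖reP A + imP A‖ ^ 2 - ‖reP A - imP A‖ ^ 2) with ⟨heq, _⟩ | ⟨heq, _⟩ <;>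
    rw [heq] <;> linarith
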